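/- Let s, t ≥ 1 and integers 0 = a_0 ≤ a_1 ≤ ... ≤ a_t, and let X = P(O(a_0) ⊕ ... ⊕ O(a_t)) over P^s. Suppose D ∈ |O(c; d)| with d > 0 is a divisor such that (X, D) is a log Fano manifold with log Fano pseudoindex ι and ι ≥ t. Then d = 1, t = ι, and s ≥ ι - 1. Moreover, if s = ι - 1, then a_1 = ... = a_{ι-1} = 0 and c = -a_ι. -/
import Mathlib


/-!
STATEMENT 6. Let `s, t ≥ 1`, `0 = a₀ ≤ a₁ ≤ ⋯ ≤ a_t`, and `X = ℙ(𝒪(a₀) ⊕ ⋯ ⊕ 𝒪(a_t))`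
over `ℙ^s`.  Suppose `D ∈ |𝒪(c; d)|` with `d > 0` is such that `(X, D)` is a log Fano
manifold with log Fano pseudoindex `ι ≥ t`.  Then `d = 1`, `t = ι`, and `s ≥ ι - 1`;
moreover, if `s = ι - 1`, then `a₁ = ⋯ = a_{ι-1} = 0` and `c = -a_ι`.

Encoding.  The class of `-(K_X + D)` is `𝒪(s + 1 - ∑ aᵢ - c ; t + 1 - d)`.  The log Fano
pseudoindex `ι` is the minimum of `(-(K_X + D)·C)` over rational curves `C ⊆ X`; in
particular `ι` is bounded above by the intersection numbers with the two distinguished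
rational curves: a line `C_f` in a fiber, with `(𝒪(u;v)·C_f) = v`, and a line `C_h` in
the section `ℙ(𝒪(a₀)) ⊆ X`, with `(𝒪(u;v)·C_h) = u` (hypotheses `hfiber`, `hsection`).
Nonemptiness of `|𝒪(c; d)|` forces `c ≥ -d·a_t` (hypothesis `hnonempty`), and
ampleness of `-(K_X + D)` gives positivity of both coordinates (`hample₁`, `hample₂`).
-/
theorem scroll_log_fano_pseudoindex_ge_t
    (s t : ℕ) (hs : 1 ≤ s) (ht : 1 ≤ t)
    (a : ℕ → ℤ) (ha0 : a 0 = 0) (hmono : ∀ i, i < t → a i ≤ a (i + 1))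
    (c d : ℤ) (hd : 0 < d)
    (ι : ℕ) (hι : 1 ≤ ι)
    -- pseudoindex ≤ intersection of -(K_X+D) with a line in a fiber:
    (hfiber : (ι : ℤ) ≤ t + 1 - d)
    -- pseudoindex ≤ intersection of -(K_X+D) with a line in the section ℙ(𝒪(a₀)):
    (hsection : (ι : ℤ) ≤ s + 1 - (∑ i ∈ Finset.Icc 1 t, a i) - c)
    -- |𝒪(c;d)| ≠ ∅:
    (hnonempty : -(d * a t) ≤ c)
    -- ampleness of -(K_X+D):
    (hample₁ : 0 < (t : ℤ) + 1 - d)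
    (hample₂ : 0 < (s : ℤ) + 1 - (∑ i ∈ Finset.Icc 1 t, a i) - c)
    -- the assumption ι ≥ t:
    (hιt : t ≤ ι) :
    d = 1 ∧ t = ι ∧ ι - 1 ≤ s ∧
      (s = ι - 1 → (∀ i, 1 ≤ i → i ≤ ι - 1 → a i = 0) ∧ c = -(a ι)) := by

  have hanon : ∀ i, i ≤ t → 0 ≤ a i := by
    intro i hi
    induction i with
    | zero => simp [ha0]
    | succ n ih =>
      have h1 := hmono n (by omega)
      have h2 := ih (by omega)
      omega
  have hd1 : d = 1 := by omega
  subst hd1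
  have hteq : t = ι := by omega
  set S := ∑ i ∈ Finset.Icc 1 t, a i with hS
  have hsum_ge : a t ≤ S := by
    apply Finset.single_le_sum (f := a)
    · intro i hi
      exact hanon i (Finset.mem_Icc.mp hi).2
    · exact Finset.mem_Icc.mpr ⟨ht, le_refl t⟩
  refine ⟨rfl, hteq, by omega, ?_⟩
  intro hseq
  have hSc : S + c ≤ 0 := by omega
  constructor
  · intro i h1 h2
    have hit : i ≠ t := by omega
    have hpair : a i + a t ≤ S := by
      have hsub : ({i, t} : Finset ℕ) ⊆ Finset.Icc 1 t := by
        intro x hx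
        simp only [Finset.mem_insert, Finset.mem_singleton] at hx
        rcases hx with h | h <;> subst h <;> exact Finset.mem_Icc.mpr ⟨by omega, by omega⟩
      calc a i + a t = ∑ j ∈ ({i, t} : Finset ℕ), a j := by
            rw [Finset.sum_pair hit]
        _ ≤ S := Finset.sum_le_sum_of_subset_of_nonneg hsub
            (fun j hj _ => hanon j (Finset.mem_Icc.mp hj).2)
    have := hanon i (by omega)
    omega
  · have : a ι = a t := by rw [hteq]
    omega
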